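/- Let β̂, β̂_Γ : ℝ → ℝ be convex functions with β̂ ≥ 0, β̂_Γ ≥ 0 and β̂(0) = β̂_Γ(0) = 0, and let ϱ > 0 and c₀ > 0. Assume the domination condition: for every r ∈ ℝ and every subgradient s_Γ of β̂_Γ at r, there exists a subgradient s of β̂ at r with |s| ≤ ϱ·|s_Γ| + c₀ (i.e. |β°(r)| ≤ ϱ·|β_Γ°(r)| + c₀ in terms of minimal sections). For ε > 0 define β_ε(r) := (r − J_ε(r))/ε, where J_ε(r) is the unique minimizer of s ↦ (r − s)²/(2ε) + β̂(s), and define β_{Γ,ε}(r) := (r − J_{Γ,ε}(r))/(εϱ), where J_{Γ,ε}(r) is the unique minimizer of s ↦ (r − s)²/(2εϱ) + β̂_Γ(s). Then for every ε > 0 and every r ∈ ℝ one has |β_ε(r)| ≤ ϱ·|β_{Γ,ε}(r)| + c₀. -/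

import Mathlib

/-- The Yosida slope `(r - x)/δ` is a subgradient of a convex `B` at the
resolvent point `x`, when `x` minimizes `s ↦ (r-s)^2/(2δ) + B s`. -/
lemma subgrad_of_resolvent (B : ℝ → ℝ) (hB : ConvexOn ℝ Set.univ B)
    (δ : ℝ) (hδ : 0 < δ) (r x : ℝ)
    (hx : ∀ s : ℝ, (r - x) ^ 2 / (2 * δ) + B x ≤ (r - s) ^ 2 / (2 * δ) + B s) :
    ∀ t : ℝ, B x + (r - x) / δ * (t - x) ≤ B t := by
  intro t
  set K : ℝ := (t - x) ^ 2 / (2 * δ) with hKdef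
  have hK : 0 ≤ K := by positivity
  have key : ∀ θ : ℝ, 0 < θ → θ ≤ 1 →
      B x + (r - x) / δ * (t - x) ≤ B t + θ * K := by
    intro θ hθ0 hθ1
    have hz := hB.2 (Set.mem_univ x) (Set.mem_univ t)
      (by linarith : (0:ℝ) ≤ 1 - θ) (le_of_lt hθ0) (by ring)
    simp only [smul_eq_mul] at hz
    have hmin := hx ((1 - θ) * x + θ * t)
    have hδne : δ ≠ 0 := ne_of_gt hδ
    have e1 : (r - ((1 - θ) * x + θ * t)) ^ 2 / (2 * δ)
        = (r - x) ^ 2 / (2 * δ) - θ * ((r - x) / δ * (t - x)) + θ ^ 2 * K := by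
      rw [hKdef]; field_simp; ring
    rw [e1] at hmin
    have h1 : θ * ((r - x) / δ * (t - x)) ≤ θ * ((B t - B x) + θ * K) := by
      nlinarith [hmin, hz]
    have h2 := (mul_le_mul_iff_right₀ hθ0).mp h1
    linarith
  refine le_of_forall_pos_le_add ?_
  intro η hη
  set θ : ℝ := min 1 (η / (K + 1)) with hθdef
  have hθ0 : 0 < θ := lt_min one_pos (by positivity)
  have hθ1 : θ ≤ 1 := min_le_left _ _
  have h := key θ hθ0 hθ1
  have hθK : θ * K ≤ η := by
    have h1 : θ ≤ η / (K + 1) := min_le_right _ _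
    have h2 : θ * K ≤ (η / (K + 1)) * K := mul_le_mul_of_nonneg_right h1 hK
    have h3 : (η / (K + 1)) * K ≤ η := by
      rw [div_mul_eq_mul_div, div_le_iff₀ (by linarith)]
      nlinarith
    linarith
  linarith

/-- If `|β°(r)| ≤ ϱ|β_Γ°(r)| + c₀` (in the sense of subgradients), then the same
domination holds for the Yosida approximations `β_ε` (parameter `ε`) and
`β_{Γ,ε}` (parameter `εϱ`): `|β_ε(r)| ≤ ϱ|β_{Γ,ε}(r)| + c₀`. -/
theorem yosida_domination
    (B BΓ : ℝ → ℝ) (hB : ConvexOn ℝ Set.univ B) (hBΓ : ConvexOn ℝ Set.univ BΓ)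
    (hBnonneg : ∀ t : ℝ, 0 ≤ B t) (hBΓnonneg : ∀ t : ℝ, 0 ≤ BΓ t)
    (hB0 : B 0 = 0) (hBΓ0 : BΓ 0 = 0)
    (ϱ c₀ : ℝ) (hϱ : 0 < ϱ) (hc₀ : 0 < c₀)
    (hdom : ∀ r sΓ : ℝ, (∀ t : ℝ, BΓ r + sΓ * (t - r) ≤ BΓ t) →
      ∃ s : ℝ, (∀ t : ℝ, B r + s * (t - r) ≤ B t) ∧ |s| ≤ ϱ * |sΓ| + c₀)
    (ε : ℝ) (hε : 0 < ε)
    (J JΓ : ℝ → ℝ)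
    (hJ : ∀ r s : ℝ, (r - J r) ^ 2 / (2 * ε) + B (J r) ≤ (r - s) ^ 2 / (2 * ε) + B s)
    (hJΓ : ∀ r s : ℝ,
      (r - JΓ r) ^ 2 / (2 * (ε * ϱ)) + BΓ (JΓ r) ≤ (r - s) ^ 2 / (2 * (ε * ϱ)) + BΓ s) :
    ∀ r : ℝ, |(r - J r) / ε| ≤ ϱ * |(r - JΓ r) / (ε * ϱ)| + c₀ := by
  intro r
  have hεϱ : 0 < ε * ϱ := mul_pos hε hϱ
  have hsubB : ∀ t : ℝ, B (J r) + (r - J r) / ε * (t - J r) ≤ B t :=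
    subgrad_of_resolvent B hB ε hε r (J r) (hJ r)
  have hsubBΓ : ∀ t : ℝ, BΓ (JΓ r) + (r - JΓ r) / (ε * ϱ) * (t - JΓ r) ≤ BΓ t :=
    subgrad_of_resolvent BΓ hBΓ (ε * ϱ) hεϱ r (JΓ r) (hJΓ r)
  obtain ⟨s, hs, hsbound⟩ := hdom (JΓ r) ((r - JΓ r) / (ε * ϱ)) hsubBΓ
  set a : ℝ := r - J r with hadef
  set b : ℝ := r - JΓ r with hbdef
  -- monotonicity of the subdifferential
  have hmono' : 0 ≤ (a - ε * s) * (b - a) := by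
    have h1 := hsubB (JΓ r)
    have h2 := hs (J r)
    have e1 : JΓ r - J r = a - b := by rw [hadef, hbdef]; ring
    have e2 : J r - JΓ r = b - a := by rw [hadef, hbdef]; ring
    rw [e1] at h1
    rw [e2] at h2
    have h1' : ε * B (J r) + a * (a - b) ≤ ε * B (JΓ r) := by
      have hm := mul_le_mul_of_nonneg_left h1 hε.le
      have e : ε * (B (J r) + a / ε * (a - b)) = ε * B (J r) + a * (a - b) := by
        field_simp
      rw [e] at hm
      linarith [hm]
    have h2' : ε * B (JΓ r) + ε * (s * (b - a)) ≤ ε * B (J r) := by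
      have hm := mul_le_mul_of_nonneg_left h2 hε.le
      linarith [hm, (by ring : ε * (B (JΓ r) + s * (b - a)) = ε * B (JΓ r) + ε * (s * (J r - JΓ r)))]
    have e4 : (a - ε * s) * (b - a) = -(a * (a - b) + ε * (s * (b - a))) := by ring
    rw [e4]
    linarith
  have habs : ϱ * |b / (ε * ϱ)| = |b| / ε := by
    rw [abs_div, abs_of_pos hεϱ]
    field_simp
  have hsb : |s| ≤ |b| / ε + c₀ := by rw [habs] at hsbound; exact hsbound
  have hεs : ε * |s| ≤ |b| + ε * c₀ := by
    have h := mul_le_mul_of_nonneg_left hsb hε.le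
    have e : ε * (|b| / ε + c₀) = |b| + ε * c₀ := by field_simp
    rw [e] at h
    exact h
  have hgoal : |a| ≤ |b| + ε * c₀ := by
    rw [abs_le]
    constructor
    · by_contra h
      push_neg at h
      have ha : a < -(|b| + ε * c₀) := by linarith
      have hns : -(ε * |s|) ≤ ε * s := by nlinarith [neg_abs_le s]
      have h1 : a - ε * s < 0 := by nlinarith [abs_nonneg b]
      have h2 : 0 < b - a := by nlinarith [neg_abs_le b]
      nlinarith
    · by_contra h
      push_neg at h
      have hps : ε * s ≤ ε * |s| := by nlinarith [le_abs_self s]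
      have h1 : 0 < a - ε * s := by nlinarith [abs_nonneg b]
      have h2 : b - a < 0 := by nlinarith [le_abs_self b]
      nlinarith
  rw [habs, abs_div, abs_of_pos hε, div_le_iff₀ hε]
  have hexp : (|b| / ε + c₀) * ε = |b| + ε * c₀ := by field_simp
  rw [hexp]
  exact hgoal
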